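/- Let ℓ > 0, n ∈ ℤ with n ≠ 0, and 0 < r < π/ℓ. Then (1/(2πi)) ∮_{|k − nπ/ℓ| = r} (cot²(kℓ)/k) dk = −1/(n²π²), where the circle is traversed once counterclockwise. -/

import Mathlib

open Real Metric Filter

/-- Auxiliary: the analytic extension of `w ↦ w² cot(wℓ)²` at `w = 0`. -/
noncomputable def cotSqAux (ℓ : ℝ) : ℂ → ℂ :=
  fun w => if w = 0 then 1 / (ℓ : ℂ) ^ 2 else w ^ 2 * Complex.cot (w * ℓ) ^ 2

lemma Complex.cot_eq_inv_tan (z : ℂ) : Complex.cot z = (Complex.tan z)⁻¹ := by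
  rw [Complex.cot_eq_cos_div_sin, Complex.tan_eq_sin_div_cos, inv_div]

lemma cotSqAux_even (ℓ : ℝ) (w : ℂ) : cotSqAux ℓ (-w) = cotSqAux ℓ w := by
  unfold cotSqAux
  rcases eq_or_ne w 0 with rfl | hw
  · simp
  · rw [if_neg (neg_ne_zero.2 hw), if_neg hw]
    have : Complex.cot (-w * ℓ) = -Complex.cot (w * ℓ) := by
      rw [Complex.cot_eq_cos_div_sin, Complex.cot_eq_cos_div_sin, neg_mul,
        Complex.sin_neg, Complex.cos_neg, div_neg]
    rw [this]
    ring

lemma sin_mul_ne_zero_of_small {ℓ : ℝ} (hℓ : 0 < ℓ) {w : ℂ} (hw : w ≠ 0)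
    (hw' : ‖w‖ < π / ℓ) : Complex.sin (w * ℓ) ≠ 0 := by
  intro h
  rcases Complex.sin_eq_zero_iff.1 h with ⟨m, hm⟩
  have habs : ‖w‖ * ℓ = |(m : ℝ)| * π := by
    have := congrArg (‖·‖) hm
    simpa [norm_mul, Complex.norm_real, Real.norm_eq_abs, abs_of_pos hℓ, abs_of_pos Real.pi_pos,
      Complex.norm_intCast] using this
  have hm0 : m = 0 := by
    by_contra hm0
    have h1 : (1 : ℝ) ≤ |(m : ℝ)| := by
      rw [← Int.cast_abs]
      exact_mod_cast Int.one_le_abs hm0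
    have h2 : ‖w‖ * ℓ < π := (lt_div_iff₀ hℓ).1 hw'
    nlinarith [Real.pi_pos]
  rw [hm0] at hm
  simp at hm
  rcases hm with hm | hm
  · exact hw hm
  · exact hℓ.ne' (by exact_mod_cast hm)

lemma cotSqAux_differentiableOn {ℓ : ℝ} (hℓ : 0 < ℓ) :
    DifferentiableOn ℂ (cotSqAux ℓ) (ball (0 : ℂ) (π / ℓ)) := by
  have hπℓ : 0 < π / ℓ := div_pos Real.pi_pos hℓ
  have hmem : ball (0 : ℂ) (π / ℓ) ∈ nhds (0 : ℂ) :=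
    isOpen_ball.mem_nhds (mem_ball_self hπℓ)
  rw [← Complex.differentiableOn_compl_singleton_and_continuousAt_iff hmem]
  constructor
  · -- differentiability away from 0
    intro w hw
    obtain ⟨hwball, hw0⟩ := hw
    have hw0 : w ≠ 0 := by simpa using hw0
    have hwabs : ‖w‖ < π / ℓ := by
      simpa [mem_ball, Complex.dist_eq] using hwball
    have hsin : Complex.sin (w * ℓ) ≠ 0 := sin_mul_ne_zero_of_small hℓ hw0 hwabs
    have hd : DifferentiableAt ℂ
        (fun z : ℂ => z ^ 2 * (Complex.cos (z * ℓ) / Complex.sin (z * ℓ)) ^ 2) w := by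
      apply DifferentiableAt.mul
      · exact (differentiableAt_id.pow 2)
      · apply DifferentiableAt.pow
        exact (Complex.differentiable_cos.differentiableAt.comp w
            (differentiableAt_id.mul_const _)).div
          (Complex.differentiable_sin.differentiableAt.comp w
            (differentiableAt_id.mul_const _)) hsin
    have heq : cotSqAux ℓ =ᶠ[nhds w]
        fun z : ℂ => z ^ 2 * (Complex.cos (z * ℓ) / Complex.sin (z * ℓ)) ^ 2 := by
      filter_upwards [compl_singleton_mem_nhds hw0] with z hz
      have hz0 : z ≠ 0 := by simpa using hz
      simp [cotSqAux, if_neg hz0, Complex.cot_eq_cos_div_sin]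
    exact (hd.congr_of_eventuallyEq heq).differentiableWithinAt
  · -- continuity at 0
    rw [← continuousWithinAt_compl_self]
    unfold ContinuousWithinAt
    have h0 : cotSqAux ℓ 0 = 1 / (ℓ : ℂ) ^ 2 := by simp [cotSqAux]
    rw [h0]
    have hℓ0 : (ℓ : ℂ) ≠ 0 := by exact_mod_cast hℓ.ne'
    -- slope limit: sin(wℓ)/w → ℓ
    have hs : HasDerivAt (fun w : ℂ => Complex.sin (w * ℓ)) ℓ 0 := by
      have h1 := (Complex.hasDerivAt_sin ((0 : ℂ) * ℓ)).comp 0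
        (hasDerivAt_mul_const (ℓ : ℂ))
      simpa [Function.comp_def] using h1
    have hslope : Tendsto (fun w : ℂ => Complex.sin (w * ℓ) / w)
        (nhdsWithin 0 {(0 : ℂ)}ᶜ) (nhds (ℓ : ℂ)) := by
      have := hasDerivAt_iff_tendsto_slope.1 hs
      refine this.congr fun w => ?_
      simp [slope_def_field]
    have hinv : Tendsto (fun w : ℂ => w / Complex.sin (w * ℓ))
        (nhdsWithin 0 {(0 : ℂ)}ᶜ) (nhds ((ℓ : ℂ)⁻¹)) := by
      have := hslope.inv₀ hℓ0
      refine this.congr fun w => ?_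
      rw [inv_div]
    have hcos : Tendsto (fun w : ℂ => Complex.cos (w * ℓ))
        (nhdsWithin 0 {(0 : ℂ)}ᶜ) (nhds 1) := by
      have : Continuous (fun w : ℂ => Complex.cos (w * ℓ)) :=
        Complex.continuous_cos.comp (continuous_id.mul continuous_const)
      have h2 := this.tendsto 0
      simp only [zero_mul, Complex.cos_zero] at h2
      exact h2.mono_left nhdsWithin_le_nhds
    have hmul : Tendsto (fun w : ℂ => w * Complex.cot (w * ℓ))
        (nhdsWithin 0 {(0 : ℂ)}ᶜ) (nhds ((ℓ : ℂ)⁻¹)) := by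
      have := hinv.mul hcos
      rw [mul_one] at this
      refine this.congr fun w => ?_
      rw [Complex.cot_eq_cos_div_sin]
      field_simp
    have hsq : Tendsto (fun w : ℂ => (w * Complex.cot (w * ℓ)) ^ 2)
        (nhdsWithin 0 {(0 : ℂ)}ᶜ) (nhds (((ℓ : ℂ)⁻¹) ^ 2)) := hmul.pow 2
    have : ((ℓ : ℂ)⁻¹) ^ 2 = 1 / (ℓ : ℂ) ^ 2 := by
      rw [inv_pow, one_div]
    rw [this] at hsq
    refine hsq.congr' ?_
    filter_upwards [self_mem_nhdsWithin] with w hw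
    have hw0 : w ≠ 0 := by simpa using hw
    simp [cotSqAux, if_neg hw0, mul_pow]

lemma deriv_cotSqAux_zero (ℓ : ℝ) : deriv (cotSqAux ℓ) 0 = 0 := by
  have h := deriv_comp_neg (f := cotSqAux ℓ) (x := (0 : ℂ))
  have heq : (fun x : ℂ => cotSqAux ℓ (-x)) = cotSqAux ℓ := by
    funext x; exact cotSqAux_even ℓ x
  rw [heq, neg_zero] at h
  linear_combination h / 2

/-- `(1/(2πi)) ∮_{|k − nπ/ℓ| = r} cot²(kℓ)/k dk = −1/(n²π²)` for `n ≠ 0`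
and `0 < r < π/ℓ`. -/
theorem circleIntegral_cot_sq_div_k
    (ℓ : ℝ) (hℓ : 0 < ℓ) (n : ℤ) (hn : n ≠ 0) (r : ℝ) (hr : 0 < r) (hr' : r < π / ℓ) :
    (1 / (2 * (π : ℂ) * Complex.I)) *
        (∮ k in C((((n : ℝ) * π / ℓ : ℝ) : ℂ), r), Complex.cot (k * ℓ) ^ 2 / k)
      = -(1 / ((n : ℂ) ^ 2 * (π : ℂ) ^ 2)) := by
  have hπℓ : 0 < π / ℓ := div_pos Real.pi_pos hℓ
  set k₀ : ℂ := (((n : ℝ) * π / ℓ : ℝ) : ℂ) with hk₀def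
  have hℓ0 : (ℓ : ℂ) ≠ 0 := by exact_mod_cast hℓ.ne'
  have hπ0 : (π : ℂ) ≠ 0 := by exact_mod_cast Real.pi_ne_zero
  have hn0 : (n : ℂ) ≠ 0 := Int.cast_ne_zero.2 hn
  have hk₀ℓ : k₀ * ℓ = (n : ℂ) * π := by
    rw [hk₀def]; push_cast; field_simp
  have hk₀0 : k₀ ≠ 0 := by
    rw [hk₀def]
    refine Complex.ofReal_ne_zero.2 ?_
    exact div_ne_zero (mul_ne_zero (Int.cast_ne_zero.2 hn) Real.pi_ne_zero) hℓ.ne'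
  have h1n : (1 : ℝ) ≤ |(n : ℝ)| := by
    rw [← Int.cast_abs]; exact_mod_cast Int.one_le_abs hn
  have habs : π / ℓ ≤ ‖k₀‖ := by
    rw [hk₀def, Complex.norm_real, Real.norm_eq_abs, abs_div, abs_of_pos hℓ, abs_mul,
      abs_of_pos Real.pi_pos]
    gcongr
    nlinarith [Real.pi_pos]
  have hne0 : ∀ k ∈ ball k₀ (π / ℓ), k ≠ 0 := by
    intro k hk hk0
    rw [mem_ball, hk0] at hk
    have : dist (0 : ℂ) k₀ = ‖k₀‖ := by
      rw [Complex.dist_eq, zero_sub, norm_neg]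
    rw [this] at hk
    exact absurd hk (not_lt.2 habs)
  set F : ℂ → ℂ := fun k => cotSqAux ℓ (k - k₀) / k with hF
  have hFdiff : DifferentiableOn ℂ F (ball k₀ (π / ℓ)) := by
    intro k hk
    have hk0 : k ≠ 0 := hne0 k hk
    have hgat : DifferentiableAt ℂ (cotSqAux ℓ) (k - k₀) := by
      refine (cotSqAux_differentiableOn hℓ).differentiableAt (isOpen_ball.mem_nhds ?_)
      simpa [mem_ball, Complex.dist_eq, sub_zero] using hk
    exact ((hgat.comp k (differentiableAt_id.sub_const k₀)).div
      differentiableAt_id hk0).differentiableWithinAt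
  have hkey := Complex.two_pi_I_inv_smul_circleIntegral_sub_sq_inv_smul_of_differentiable
    isOpen_ball (closedBall_subset_ball hr') hFdiff (mem_ball_self hr)
  have hint : (∮ k in C(k₀, r), Complex.cot (k * ℓ) ^ 2 / k)
      = ∮ z in C(k₀, r), ((z - k₀) ^ 2)⁻¹ • F z := by
    refine circleIntegral.integral_congr hr.le fun z hz => ?_
    have hzr : ‖z - k₀‖ = r := by
      simpa [Complex.dist_eq] using hz
    have hz0 : z - k₀ ≠ 0 := by
      intro h; rw [h] at hzr; simp at hzr; exact hr.ne hzr
    have hsq : (z - k₀) ^ 2 ≠ 0 := pow_ne_zero _ hz0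
    have hcot : Complex.cot (z * ℓ) = Complex.cot ((z - k₀) * ℓ) := by
      rw [Complex.cot_eq_inv_tan, Complex.cot_eq_inv_tan]
      congr 1
      have hzz : z * ℓ = (z - k₀) * ℓ + (n : ℂ) * π := by rw [← hk₀ℓ]; ring
      rw [hzz, Complex.tan_add_int_mul_pi]
    have hcs : cotSqAux ℓ (z - k₀) = (z - k₀) ^ 2 * Complex.cot (z * ℓ) ^ 2 := by
      rw [hcot]; simp [cotSqAux, if_neg hz0]
    simp only [smul_eq_mul, hF]
    rw [hcs, ← mul_div_assoc, inv_mul_cancel_left₀ hsq]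
  have hgd : DifferentiableAt ℂ (cotSqAux ℓ) 0 :=
    (cotSqAux_differentiableOn hℓ).differentiableAt
      (isOpen_ball.mem_nhds (mem_ball_self hπℓ))
  have h1 : HasDerivAt (fun k : ℂ => cotSqAux ℓ (k - k₀)) 0 k₀ := by
    have hsub : HasDerivAt (fun k : ℂ => k - k₀) 1 k₀ := (hasDerivAt_id k₀).sub_const k₀
    have h2 : HasDerivAt (cotSqAux ℓ) 0 ((fun k : ℂ => k - k₀) k₀) := by
      simp only [sub_self]
      simpa [deriv_cotSqAux_zero] using hgd.hasDerivAt
    simpa [Function.comp_def] using HasDerivAt.comp (x := k₀) (h := fun k : ℂ => k - k₀) h2 hsub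
  have hinvd : HasDerivAt (fun k : ℂ => k⁻¹) (-(k₀ ^ 2)⁻¹) k₀ := hasDerivAt_inv hk₀0
  have h0 : cotSqAux ℓ 0 = 1 / (ℓ : ℂ) ^ 2 := by simp [cotSqAux]
  have hFd : HasDerivAt F (-(1 / (ℓ : ℂ) ^ 2 * (k₀ ^ 2)⁻¹)) k₀ := by
    have h3 := h1.mul hinvd
    simp only [sub_self, h0, zero_mul, zero_add, mul_neg] at h3
    simpa [hF, div_eq_mul_inv, Pi.mul_def] using h3
  rw [hint]
  have hsmul : (1 / (2 * (π : ℂ) * Complex.I)) *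
      (∮ z in C(k₀, r), ((z - k₀) ^ 2)⁻¹ • F z)
      = (2 * (π : ℂ) * Complex.I)⁻¹ • (∮ z in C(k₀, r), ((z - k₀) ^ 2)⁻¹ • F z) := by
    rw [smul_eq_mul, one_div]
  rw [hsmul, hkey, hFd.deriv, hk₀def]
  have hk₀sq : ((((n : ℝ) * π / ℓ : ℝ) : ℂ)) ^ 2 = (n : ℂ) ^ 2 * (π : ℂ) ^ 2 / (ℓ : ℂ) ^ 2 := by
    push_cast; field_simp
  rw [hk₀sq]
  field_simp
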